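/- Let α > 1 and β > 1 be real numbers and d a positive integer. Suppose that for every (n, m) ∈ ℤ² \ {(0,0)} with αⁿβᵐ > 1, the real number αⁿβᵐ is the Salem number of some Salem polynomial of degree at most d. Then α and β are multiplicatively dependent, i.e. there exists (n, m) ∈ ℤ² \ {(0,0)} with αⁿβᵐ = 1. -/

import Mathlib

open Polynomial


/-- `Φ` is a Salem polynomial with Salem number `α`: a monic irreducible polynomial in `ℤ[t]`
whose complex roots consist of the two real roots `α > 1` and `1/α`, together with the
remaining roots on the unit circle. -/
def IsSalemWithNumber (Φ : Polynomial ℤ) (α : ℝ) : Prop :=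
  Φ.Monic ∧ Irreducible Φ ∧ 1 < α ∧
    ∃ s : Multiset ℂ,
      (Φ.map (Int.castRingHom ℂ)).roots = (α : ℂ) ::ₘ ((α : ℂ)⁻¹) ::ₘ s ∧
      ∀ z ∈ s, ‖z‖ = 1

/-- If `α, β > 1` are such that every `αⁿβᵐ > 1` (with `(n,m) ≠ (0,0)`) is the Salem number
of some Salem polynomial of degree at most `d`, then `α` and `β` are multiplicatively
dependent. -/
theorem multiplicatively_dependent_of_salem_numbers
    (α β : ℝ) (hα : 1 < α) (hβ : 1 < β) (d : ℕ) (hd : 0 < d)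
    (h : ∀ n m : ℤ, (n, m) ≠ (0, 0) → 1 < α ^ n * β ^ m →
      ∃ Φ : Polynomial ℤ, IsSalemWithNumber Φ (α ^ n * β ^ m) ∧ Φ.natDegree ≤ d) :
    ∃ n m : ℤ, (n, m) ≠ (0, 0) ∧ α ^ n * β ^ m = 1 := by
  classical
  by_contra hcon
  push_neg at hcon
  have hα0 : (0:ℝ) < α := lt_trans one_pos hα
  have hβ0 : (0:ℝ) < β := lt_trans one_pos hβ
  have hlogβ : 0 < Real.log β := Real.log_pos hβ
  set N : ℕ → ℤ := fun k => (k : ℤ) + 1 with hN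
  set M : ℕ → ℤ := fun k => -⌊((N k : ℝ) * Real.log α) / Real.log β⌋ with hM
  set σ : ℕ → ℝ := fun k => α ^ N k * β ^ M k with hσ
  have hσdef : ∀ k, σ k = α ^ N k * β ^ M k := fun _ => rfl
  have hσpos : ∀ k, 0 < σ k := fun k => mul_pos (zpow_pos hα0 _) (zpow_pos hβ0 _)
  have hNM : ∀ k, (N k, M k) ≠ (0, 0) := by
    intro k hk
    have h1 : (k : ℤ) + 1 = 0 := by simpa [hN] using congrArg Prod.fst hk
    omega
  have hlog : ∀ k, 0 ≤ Real.log (σ k) ∧ Real.log (σ k) < Real.log β := by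
    intro k
    have hfr : Real.log (σ k) =
        Int.fract (((N k : ℝ) * Real.log α) / Real.log β) * Real.log β := by
      rw [hσdef k,
        Real.log_mul (ne_of_gt (zpow_pos hα0 _)) (ne_of_gt (zpow_pos hβ0 _)),
        Real.log_zpow, Real.log_zpow, hM, Int.fract]
      push_cast
      field_simp
      ring
    rw [hfr]
    constructor
    · exact mul_nonneg (Int.fract_nonneg _) hlogβ.le
    · nlinarith [Int.fract_lt_one (((N k : ℝ) * Real.log α) / Real.log β), hlogβ]
  have hσlt : ∀ k, σ k < β := by
    intro k
    have h2 := Real.exp_lt_exp.2 (hlog k).2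
    rwa [Real.exp_log (hσpos k), Real.exp_log hβ0] at h2
  have hσgt : ∀ k, 1 < σ k := by
    intro k
    have h1 : 1 ≤ σ k := by
      have := Real.exp_le_exp.2 (hlog k).1
      rwa [Real.exp_zero, Real.exp_log (hσpos k)] at this
    rcases lt_or_eq_of_le h1 with h2 | h2
    · exact h2
    · exact absurd ((hσdef k) ▸ h2.symm) (hcon (N k) (M k) (hNM k))
  set Bc : ℝ := max β 1 ^ d * d.choose (d / 2) with hBc
  set C : ℤ := ⌈Bc⌉ with hC
  have hfin := Polynomial.bUnion_roots_finite (Int.castRingHom ℂ) d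
    (Set.finite_Icc (-C) C)
  have hmaps : Set.MapsTo (fun k : ℕ => ((σ k : ℝ) : ℂ)) Set.univ
      (⋃ (f : ℤ[X]) (_ : f.natDegree ≤ d ∧ ∀ i, f.coeff i ∈ Set.Icc (-C) C),
        ((f.map (Int.castRingHom ℂ)).roots.toFinset : Set ℂ)) := by
    intro k _
    obtain ⟨Φ, ⟨hmon, _, _, s, hroots, hs⟩, hdeg⟩ := h (N k) (M k) (hNM k) (hσdef k ▸ hσgt k)
    have hrootmem : ((σ k : ℝ) : ℂ) ∈ (Φ.map (Int.castRingHom ℂ)).roots := by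
      rw [hσdef k, hroots]; exact Multiset.mem_cons_self _ _
    have hrbd : ∀ z ∈ (Φ.map (Int.castRingHom ℂ)).roots, ‖z‖ ≤ β := by
      intro z hz
      rw [hroots] at hz
      rcases Multiset.mem_cons.1 hz with rfl | hz
      · rw [Complex.norm_real, Real.norm_eq_abs, abs_of_pos (hσpos k)]
        exact (hσlt k).le
      rcases Multiset.mem_cons.1 hz with rfl | hz
      · rw [← Complex.ofReal_inv, Complex.norm_real, Real.norm_eq_abs,
          abs_of_pos (inv_pos.2 (hσpos k))]
        have : (σ k)⁻¹ ≤ 1 := inv_le_one_of_one_le₀ (hσgt k).le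
        linarith
      · rw [hs z hz]
        exact hβ.le
    have hcoeff : ∀ i, Φ.coeff i ∈ Set.Icc (-C) C := by
      intro i
      have hb := coeff_bdd_of_roots_le (Int.castRingHom ℂ) hmon
        (IsAlgClosed.splits _) hdeg hrbd i
      rw [coeff_map] at hb
      have hcast : ‖(Int.castRingHom ℂ) (Φ.coeff i)‖ = |(Φ.coeff i : ℝ)| := by
        simp [Int.norm_eq_abs]
      rw [hcast] at hb
      rw [Set.mem_Icc, ← abs_le, ← @Int.cast_le ℝ]
      calc ((|Φ.coeff i| : ℤ) : ℝ) = |(Φ.coeff i : ℝ)| := by rw [Int.cast_abs]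
        _ ≤ Bc := hb
        _ ≤ (C : ℝ) := Int.le_ceil _
    rw [Set.mem_iUnion]
    exact ⟨Φ, Set.mem_iUnion.2 ⟨⟨hdeg, hcoeff⟩, by
      simpa [Multiset.mem_toFinset] using hrootmem⟩⟩
  obtain ⟨a, -, b, -, hab, heq⟩ :=
    Set.infinite_univ.exists_ne_map_eq_of_mapsTo hmaps hfin
  have heqσ : σ a = σ b := by exact_mod_cast heq
  have heq2 : α ^ N a * β ^ M a = α ^ N b * β ^ M b := by
    rw [← hσdef a, ← hσdef b]; exact heqσ
  have hden : α ^ N b * β ^ M b ≠ 0 := ne_of_gt (hσdef b ▸ hσpos b)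
  refine hcon (N a - N b) (M a - M b) ?_ ?_
  · intro hk
    simp only [Prod.mk.injEq, sub_eq_zero] at hk
    have h2 : (a : ℤ) + 1 = (b : ℤ) + 1 := hk.1
    omega
  · rw [zpow_sub₀ (ne_of_gt hα0), zpow_sub₀ (ne_of_gt hβ0), div_mul_div_comm,
      heq2, div_self hden]
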